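/- Let n ≥ 2 and let c ∈ ℂ with c ≠ 0, c² ≠ 4. Then the system of polynomial equations c·u + v + u·(u²+v²)^{n-1} = 0 and -u + v·(u²+v²)^{n-1} = 0 has exactly 4n−3 distinct solutions (u,v) ∈ ℂ². -/

import Mathlib

open Polynomial
theorem root_count_4n_sub_3 (n : ℕ) (hn : 2 ≤ n) (c : ℂ) (hc : c ≠ 0) (hc2 : c ^ 2 ≠ 4) :
    {p : ℂ × ℂ | c * p.1 + p.2 + p.1 * (p.1 ^ 2 + p.2 ^ 2) ^ (n - 1) = 0 ∧
        -p.1 + p.2 * (p.1 ^ 2 + p.2 ^ 2) ^ (n - 1) = 0}.ncard = 4 * n - 3 := by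
  classical
  set k := n - 1 with hkdef
  have hk0 : k ≠ 0 := by omega
  obtain ⟨s, hs⟩ : ∃ s : ℂ, s ^ 2 = c ^ 2 - 4 :=
    IsAlgClosed.exists_pow_nat_eq (c ^ 2 - 4) (by norm_num)
  have hs0 : s ≠ 0 := by
    intro h; apply hc2; rw [h] at hs; simp at hs; linear_combination -hs
  obtain ⟨α, β, hadd, hmul, hαβ⟩ : ∃ α β : ℂ, α + β = -c ∧ α * β = 1 ∧ α ≠ β := by
    refine ⟨(-c + s) / 2, (-c - s) / 2, by ring, by linear_combination (-1/4 : ℂ) * hs, ?_⟩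
    intro h
    apply hs0
    have h2 : ((-c + s) / 2) - ((-c - s) / 2) = s := by ring
    rw [h] at h2; simpa using h2.symm
  have hα0 : α ≠ 0 := fun h => by simp [h] at hmul
  have hβ0 : β ≠ 0 := fun h => by simp [h] at hmul
  have hζk := Complex.isPrimitiveRoot_exp k hk0
  have hζ2 := Complex.isPrimitiveRoot_exp 2 (by norm_num)
  -- root finsets
  set Rα : Finset ℂ := (nthRoots k α).toFinset with hRα
  set Rβ : Finset ℂ := (nthRoots k β).toFinset with hRβ
  have memRα : ∀ w : ℂ, w ∈ Rα ↔ w ^ k = α := by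
    intro w; rw [hRα, Multiset.mem_toFinset, mem_nthRoots (by omega)]
  have memRβ : ∀ w : ℂ, w ∈ Rβ ↔ w ^ k = β := by
    intro w; rw [hRβ, Multiset.mem_toFinset, mem_nthRoots (by omega)]
  have cardRα : Rα.card = k := by
    rw [hRα, Multiset.toFinset_card_of_nodup (hζk.nthRoots_nodup hα0),
      hζk.card_nthRoots, if_pos (IsAlgClosed.exists_pow_nat_eq α (by omega))]
  have cardRβ : Rβ.card = k := by
    rw [hRβ, Multiset.toFinset_card_of_nodup (hζk.nthRoots_nodup hβ0),
      hζk.card_nthRoots, if_pos (IsAlgClosed.exists_pow_nat_eq β (by omega))]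
  have hdisj : Disjoint Rα Rβ := by
    rw [Finset.disjoint_left]
    intro w hwα hwβ
    exact hαβ ((memRα w).1 hwα ▸ (memRβ w).1 hwβ ▸ rfl)
  set R : Finset ℂ := Rα ∪ Rβ with hR
  have memR : ∀ w : ℂ, w ∈ R ↔ (w ^ k = α ∨ w ^ k = β) := by
    intro w; rw [hR, Finset.mem_union, memRα, memRβ]
  have cardR : R.card = 2 * k := by
    rw [hR, Finset.card_union_of_disjoint hdisj, cardRα, cardRβ]; ring
  -- basic facts about roots
  have hw0 : ∀ w : ℂ, w ∈ R → w ≠ 0 := by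
    intro w hw h
    rcases (memR w).1 hw with h1 | h1
    · exact hα0 (by rw [← h1, h, zero_pow hk0])
    · exact hβ0 (by rw [← h1, h, zero_pow hk0])
  have hP : ∀ w : ℂ, w ∈ R → (w ^ k) ^ 2 + c * w ^ k + 1 = 0 := by
    intro w hw
    rcases (memR w).1 hw with h1 | h1 <;> rw [h1]
    · linear_combination α * hadd - hmul
    · linear_combination β * hadd - hmul
  -- the value e w and its square roots
  set e : ℂ → ℂ := fun w => -(c * w ^ (k - 1))⁻¹ with he
  have he0 : ∀ w : ℂ, w ∈ R → e w ≠ 0 := by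
    intro w hw
    have := hw0 w hw
    simp [he, hc, pow_ne_zero, this]
  set sq : ℂ → Finset ℂ := fun w => (nthRoots 2 (e w)).toFinset with hsq
  have memsq : ∀ w v : ℂ, v ∈ sq w ↔ v ^ 2 = e w := by
    intro w v; rw [hsq]; simp only [Multiset.mem_toFinset, mem_nthRoots (by norm_num : 0 < 2)]
  have cardsq : ∀ w : ℂ, w ∈ R → (sq w).card = 2 := by
    intro w hw
    rw [hsq]
    rw [Multiset.toFinset_card_of_nodup (hζ2.nthRoots_nodup (he0 w hw)),
      hζ2.card_nthRoots, if_pos (IsAlgClosed.exists_pow_nat_eq (e w) (by norm_num))]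
  -- key algebra
  have hpowk : ∀ w : ℂ, w ^ (k - 1) * w = w ^ k := by
    intro w
    rw [← pow_succ]
    congr 1
    omega
  have hv' : ∀ w v : ℂ, w ∈ R → v ^ 2 = e w → c * v ^ 2 * w ^ (k - 1) = -1 := by
    intro w v hw hv
    rw [hv, he]
    have h1 : c * w ^ (k - 1) ≠ 0 := mul_ne_zero hc (pow_ne_zero _ (hw0 w hw))
    field_simp
    rw [div_self (pow_ne_zero _ (hw0 w hw))]
  have hkey : ∀ w v : ℂ, w ∈ R → v ^ 2 = e w → (v * w ^ k) ^ 2 + v ^ 2 = w := by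
    intro w v hw hv
    have h1 := hP w hw
    have h2 := hv' w v hw hv
    have h3 := hpowk w
    linear_combination v ^ 2 * h1 + (-w) * h2 + (c * v ^ 2) * h3
  -- the big finset
  set F : ℂ → Finset (ℂ × ℂ) := fun w => (sq w).image (fun v => (v * w ^ k, v)) with hF
  have memF : ∀ w : ℂ, ∀ p : ℂ × ℂ, p ∈ F w ↔ ∃ x, x ^ 2 = e w ∧ (x * w ^ k, x) = p := by
    intro w p
    rw [hF]
    simp only [Finset.mem_image]
    constructor
    · rintro ⟨x, hx, hxe⟩; exact ⟨x, (memsq w x).1 hx, hxe⟩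
    · rintro ⟨x, hx, hxe⟩; exact ⟨x, (memsq w x).2 hx, hxe⟩
  have hFw : ∀ w : ℂ, ∀ p : ℂ × ℂ, w ∈ R → p ∈ F w → p.1 ^ 2 + p.2 ^ 2 = w ∧ p.2 ≠ 0 := by
    intro w p hw hp
    obtain ⟨x, hx, rfl⟩ := (memF w p).1 hp
    refine ⟨hkey w x hw hx, ?_⟩
    intro h
    apply he0 w hw
    rw [← hx]
    simp only at h
    rw [h]
    ring
  set Sf : Finset (ℂ × ℂ) := insert (0, 0) (R.biUnion F) with hSf
  -- the solution set equals Sf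
  have hset : {p : ℂ × ℂ | c * p.1 + p.2 + p.1 * (p.1 ^ 2 + p.2 ^ 2) ^ (n - 1) = 0 ∧
      -p.1 + p.2 * (p.1 ^ 2 + p.2 ^ 2) ^ (n - 1) = 0} = ↑Sf := by
    ext ⟨u, v⟩
    simp only [Set.mem_setOf_eq, hSf, Finset.coe_insert, Set.mem_insert_iff, Finset.coe_biUnion,
      Set.mem_iUnion, Finset.mem_coe, Finset.mem_biUnion]
    constructor
    · rintro ⟨h1, h2⟩
      by_cases hv : v = 0
      · left
        subst hv
        simp only [mul_zero, zero_mul, add_zero, neg_eq_zero] at h2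
        rw [h2]
      · right
        obtain ⟨w, hwdef⟩ : ∃ w : ℂ, u ^ 2 + v ^ 2 = w := ⟨_, rfl⟩
        rw [← hkdef, hwdef] at h1 h2
        have hu : u = v * w ^ k := by linear_combination -h2
        have hPw : (w ^ k) ^ 2 + c * w ^ k + 1 = 0 := by
          rw [hu] at h1
          have h4 : v * ((w ^ k) ^ 2 + c * w ^ k + 1) = 0 := by linear_combination h1
          rcases mul_eq_zero.1 h4 with h | h
          · exact absurd h hv
          · exact h
        have hwR : w ∈ R := by
          rw [memR]
          have hfac : (w ^ k - α) * (w ^ k - β) = 0 := by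
            linear_combination hPw - (w ^ k) * hadd + hmul
          rcases mul_eq_zero.1 hfac with h | h
          · exact Or.inl (sub_eq_zero.1 h)
          · exact Or.inr (sub_eq_zero.1 h)
        have hwne : w ≠ 0 := hw0 w hwR
        refine ⟨w, hwR, (memF w (u, v)).2 ⟨v, ?_, by rw [hu]⟩⟩
        rw [he]
        have hkk := hpowk w
        have h6 : c * v ^ 2 * w ^ (k - 1) = -1 := by
          have h7 : w * (c * v ^ 2 * w ^ (k - 1) + 1) = 0 := by
            linear_combination -hwdef + (u + v * w ^ k) * hu + v ^ 2 * hPw + c * v ^ 2 * hkk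
          rcases mul_eq_zero.1 h7 with h | h
          · exact absurd h hwne
          · linear_combination h
        have h8 : c * w ^ (k - 1) ≠ 0 := mul_ne_zero hc (pow_ne_zero _ hwne)
        field_simp
        linear_combination h6
    · rintro (h | ⟨w, hwR, hmem⟩)
      · rw [Prod.ext_iff] at h
        obtain ⟨h1, h2⟩ := h
        simp only at h1 h2
        subst h1; subst h2
        norm_num [zero_pow hk0, ← hkdef]
      · obtain ⟨x, hx, hxe⟩ := (memF w (u, v)).1 hmem
        rw [Prod.ext_iff] at hxe
        obtain ⟨h1, h2⟩ := hxe
        simp only at h1 h2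
        subst h2; subst h1
        have hk2 : (x * w ^ k) ^ 2 + x ^ 2 = w := hkey w x hwR hx
        rw [← hkdef, hk2]
        constructor
        · linear_combination x * hP w hwR
        · ring
  -- counting
  rw [hset, Set.ncard_coe_finset, hSf]
  have h00 : (0, 0) ∉ R.biUnion F := by
    intro h
    rw [Finset.mem_biUnion] at h
    obtain ⟨w, hw, hp⟩ := h
    exact (hFw w (0, 0) hw hp).2 rfl
  rw [Finset.card_insert_of_notMem h00]
  rw [Finset.card_biUnion]
  · have hsum : ∑ w ∈ R, (F w).card = ∑ w ∈ R, 2 := by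
      apply Finset.sum_congr rfl
      intro w hw
      rw [hF]
      rw [Finset.card_image_of_injective _ (fun a b hab => (Prod.ext_iff.1 hab).2),
        cardsq w hw]
    rw [hsum, Finset.sum_const, cardR, smul_eq_mul]
    omega
  · intro w hw w' hw' hne
    rw [Function.onFun, Finset.disjoint_left]
    intro p hp hp'
    apply hne
    rw [← (hFw w p hw hp).1, ← (hFw w' p hw' hp').1]
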